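/- Let Y, Z1, Z2, Z3, Z4, Z5 ∈ ℝ³ and suppose ⟨Y Zi Zj⟩ ≠ 0 for all i ≠ j in {1,…,5}. Then ⟨Z1 Z2 Z3⟩²/(⟨Y Z1 Z2⟩·⟨Y Z2 Z3⟩·⟨Y Z3 Z1⟩) + ⟨Z1 Z3 Z4⟩²/(⟨Y Z1 Z3⟩·⟨Y Z3 Z4⟩·⟨Y Z4 Z1⟩) + ⟨Z1 Z4 Z5⟩²/(⟨Y Z1 Z4⟩·⟨Y Z4 Z5⟩·⟨Y Z5 Z1⟩) = ⟨Z2 Z3 Z4⟩²/(⟨Y Z2 Z3⟩·⟨Y Z3 Z4⟩·⟨Y Z4 Z2⟩) + ⟨Z2 Z4 Z5⟩²/(⟨Y Z2 Z4⟩·⟨Y Z4 Z5⟩·⟨Y Z5 Z2⟩) + ⟨Z2 Z5 Z1⟩²/(⟨Y Z2 Z5⟩·⟨Y Z5 Z1⟩·⟨Y Z1 Z2⟩). -/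

import Mathlib

noncomputable def det3 (a b c : Fin 3 → ℝ) : ℝ := Matrix.det (Matrix.of ![a, b, c])

lemma det3_eq (a b c : Fin 3 → ℝ) : det3 a b c =
    a 0 * (b 1 * c 2 - b 2 * c 1) - a 1 * (b 0 * c 2 - b 2 * c 0)
      + a 2 * (b 0 * c 1 - b 1 * c 0) := by
  simp [det3, Matrix.det_fin_three]; ring

lemma quadF (t1 t2 t3 t4 p q r s u v : ℝ) (hp : p ≠ 0) (hq : q ≠ 0) (hr : r ≠ 0)
    (hs : s ≠ 0) (hu : u ≠ 0) (hv : v ≠ 0)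
    (h3 : t3 * p = t2 * q - t1 * r) (h4 : t4 * p = t2 * s - t1 * u)
    (hPl : v * p = q * u - r * s) :
    t1 ^ 2 / (p * s * -q) + t3 ^ 2 / (q * v * -r)
      = t2 ^ 2 / (p * u * -r) + t4 ^ 2 / (s * v * -u) := by
  obtain rfl : t3 = (t2 * q - t1 * r) / p := by field_simp; linarith
  obtain rfl : t4 = (t2 * s - t1 * u) / p := by field_simp; linarith
  obtain rfl : v = (q * u - r * s) / p := by field_simp; linarith
  rw [div_ne_zero_iff] at hv
  have hv' : q * u - r * s ≠ 0 := hv.1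
  rw [div_add_div _ _ (by simp [*]) (by simp [*]), div_add_div _ _ (by simp [*]) (by simp [*]),
    div_eq_div_iff (by simp [*]) (by simp [*])]
  field_simp
  ring

lemma quad (Y a b c d : Fin 3 → ℝ)
    (hab : det3 Y a b ≠ 0) (hac : det3 Y a c ≠ 0) (had : det3 Y a d ≠ 0)
    (hbc : det3 Y b c ≠ 0) (hbd : det3 Y b d ≠ 0) (hcd : det3 Y c d ≠ 0) :
    det3 a b c ^ 2 / (det3 Y a b * det3 Y b c * det3 Y c a)
      + det3 a c d ^ 2 / (det3 Y a c * det3 Y c d * det3 Y d a)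
    = det3 a b d ^ 2 / (det3 Y a b * det3 Y b d * det3 Y d a)
      + det3 b c d ^ 2 / (det3 Y b c * det3 Y c d * det3 Y d b) := by
  have sca : det3 Y c a = -det3 Y a c := by simp only [det3_eq]; ring
  have sda : det3 Y d a = -det3 Y a d := by simp only [det3_eq]; ring
  have sdb : det3 Y d b = -det3 Y b d := by simp only [det3_eq]; ring
  rw [sca, sda, sdb]
  exact quadF (det3 a b c) (det3 a b d) (det3 a c d) (det3 b c d)
    (det3 Y a b) (det3 Y a c) (det3 Y a d) (det3 Y b c) (det3 Y b d) (det3 Y c d)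
    hab hac had hbc hbd hcd
    (by simp only [det3_eq]; ring) (by simp only [det3_eq]; ring)
    (by simp only [det3_eq]; ring)

theorem stmt_9 (Y : Fin 3 → ℝ) (Z : Fin 5 → (Fin 3 → ℝ))
    (h : ∀ i j : Fin 5, i ≠ j → det3 Y (Z i) (Z j) ≠ 0) :
    det3 (Z 0) (Z 1) (Z 2) ^ 2 /
        (det3 Y (Z 0) (Z 1) * det3 Y (Z 1) (Z 2) * det3 Y (Z 2) (Z 0)) +
      det3 (Z 0) (Z 2) (Z 3) ^ 2 /
        (det3 Y (Z 0) (Z 2) * det3 Y (Z 2) (Z 3) * det3 Y (Z 3) (Z 0)) +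
      det3 (Z 0) (Z 3) (Z 4) ^ 2 /
        (det3 Y (Z 0) (Z 3) * det3 Y (Z 3) (Z 4) * det3 Y (Z 4) (Z 0)) =
    det3 (Z 1) (Z 2) (Z 3) ^ 2 /
        (det3 Y (Z 1) (Z 2) * det3 Y (Z 2) (Z 3) * det3 Y (Z 3) (Z 1)) +
      det3 (Z 1) (Z 3) (Z 4) ^ 2 /
        (det3 Y (Z 1) (Z 3) * det3 Y (Z 3) (Z 4) * det3 Y (Z 4) (Z 1)) +
      det3 (Z 1) (Z 4) (Z 0) ^ 2 /
        (det3 Y (Z 1) (Z 4) * det3 Y (Z 4) (Z 0) * det3 Y (Z 0) (Z 1)) := by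
  have e1 := quad Y (Z 0) (Z 1) (Z 2) (Z 3)
    (h 0 1 (by decide)) (h 0 2 (by decide)) (h 0 3 (by decide))
    (h 1 2 (by decide)) (h 1 3 (by decide)) (h 2 3 (by decide))
  have e2 := quad Y (Z 0) (Z 1) (Z 3) (Z 4)
    (h 0 1 (by decide)) (h 0 3 (by decide)) (h 0 4 (by decide))
    (h 1 3 (by decide)) (h 1 4 (by decide)) (h 3 4 (by decide))
  have e3 : det3 (Z 1) (Z 4) (Z 0) ^ 2 /
        (det3 Y (Z 1) (Z 4) * det3 Y (Z 4) (Z 0) * det3 Y (Z 0) (Z 1))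
      = det3 (Z 0) (Z 1) (Z 4) ^ 2 /
        (det3 Y (Z 0) (Z 1) * det3 Y (Z 1) (Z 4) * det3 Y (Z 4) (Z 0)) := by
    rw [show det3 (Z 1) (Z 4) (Z 0) = det3 (Z 0) (Z 1) (Z 4) by
      simp only [det3_eq]; ring]
    ring_nf
  rw [e3]
  linarith
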